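/- If 𝔪₁, …, 𝔪_k are ladder multisegments and 𝔫 ≤ 𝔪₁ + ⋯ + 𝔪_k is a nested sub-multiset (i.e., the segments of 𝔫 are totally ordered by containment), then #𝔫 ≤ k. -/

import Mathlib

/-- A segment is a pair of integers `(a,b)` with `a ≤ b`, viewed as the interval `[a,b] ⊆ ℤ`. -/
abbrev Seg : Type := {p : ℤ × ℤ // p.1 ≤ p.2}

/-- left endpoint -/
def segB (Δ : Seg) : ℤ := Δ.val.1
/-- right endpoint -/
def segE (Δ : Seg) : ℤ := Δ.val.2

/-- the relation `⪯'` -/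
def SegLE (Δ₁ Δ₂ : Seg) : Prop := Δ₁ = Δ₂ ∨ (segB Δ₁ < segB Δ₂ ∧ segE Δ₁ < segE Δ₂)

/-- the relation `≺` ("precedes") -/
def SegPrec (Δ₁ Δ₂ : Seg) : Prop :=
  segB Δ₁ ≤ segB Δ₂ - 1 ∧ segB Δ₂ - 1 ≤ segE Δ₁ ∧ segE Δ₁ < segE Δ₂

/-- containment `Δ₁ ⊆ Δ₂` -/
def SegSub (Δ₁ Δ₂ : Seg) : Prop := segB Δ₂ ≤ segB Δ₁ ∧ segE Δ₁ ≤ segE Δ₂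

/-- a ladder multisegment -/
def IsLadder (m : Multiset Seg) : Prop :=
  ∃ l : List Seg, m = ↑l ∧ l.Chain' (fun Δ₁ Δ₂ => segB Δ₁ < segB Δ₂ ∧ segE Δ₁ < segE Δ₂)

/-- the width of a multisegment: the minimal number of ladder multisegments summing to it -/
noncomputable def width (m : Multiset Seg) : ℕ :=
  sInf {k | ∃ L : List (Multiset Seg), L.length = k ∧ (∀ x ∈ L, IsLadder x) ∧ L.sum = m}

/-- The strict ladder order. -/
def SegLt (Δ₁ Δ₂ : Seg) : Prop := segB Δ₁ < segB Δ₂ ∧ segE Δ₁ < segE Δ₂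

instance : IsTrans Seg SegLt := ⟨fun _ _ _ h₁ h₂ => ⟨h₁.1.trans h₂.1, h₁.2.trans h₂.2⟩⟩

lemma seg_ext {x y : Seg} (h1 : segB x = segB y) (h2 : segE x = segE y) : x = y := by
  cases x; cases y; simp only [segB, segE] at h1 h2
  exact Subtype.ext (Prod.ext h1 h2)

/-- A nested sub-multiset of a ladder has at most one element. -/
lemma ladder_inter_card {m t : Multiset Seg} (hm : IsLadder m) (ht : t ≤ m)
    (hnest : ∀ x ∈ t, ∀ y ∈ t, SegSub x y ∨ SegSub y x) : t.card ≤ 1 := by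
  by_contra h
  push_neg at h
  obtain ⟨x, hxt⟩ := Multiset.exists_mem_of_ne_zero (s := t) (by rintro rfl; simp at h)
  obtain ⟨t', rfl⟩ := Multiset.exists_cons_of_mem hxt
  obtain ⟨y, hyt⟩ := Multiset.exists_mem_of_ne_zero (s := t') (by
    rintro rfl; simp at h)
  obtain ⟨t'', rfl⟩ := Multiset.exists_cons_of_mem hyt
  obtain ⟨lad, rfl, hchain⟩ := hm
  have hpw : lad.Pairwise SegLt := (List.isChain_iff_pairwise).1 hchain
  have hx : x ∈ (lad : Multiset Seg) := Multiset.mem_of_le ht (by simp)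
  have hy : y ∈ (lad : Multiset Seg) := Multiset.mem_of_le ht (by simp)
  have hsub : SegSub x y ∨ SegSub y x := hnest x (by simp) y (by simp)
  by_cases hxy : x = y
  · -- multiplicity ≥ 2 contradicts nodup
    subst hxy
    have : IsIrrefl Seg SegLt := ⟨fun a ha => lt_irrefl _ ha.1⟩
    have hnd : lad.Nodup := hpw.nodup
    have : (2 : ℕ) ≤ Multiset.count x (lad : Multiset Seg) := by
      calc (2:ℕ) ≤ Multiset.count x (x ::ₘ x ::ₘ t'') := by simp
        _ ≤ _ := Multiset.count_le_of_le x ht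
    have := Multiset.nodup_iff_count_le_one.1 (Multiset.coe_nodup.2 hnd) x
    omega
  · have hlt : SegLt x y ∨ SegLt y x := by
      have hpw' : lad.Pairwise (fun a b => SegLt a b ∨ SegLt b a) := hpw.imp Or.inl
      exact (haveI : Std.Symm (fun a b : Seg => SegLt a b ∨ SegLt b a) := ⟨fun _ _ h => h.symm⟩
        hpw'.forall) (Multiset.mem_coe.1 hx) (Multiset.mem_coe.1 hy) hxy
    rcases hsub with ⟨h1, h2⟩ | ⟨h1, h2⟩ <;> rcases hlt with ⟨h3, h4⟩ | ⟨h3, h4⟩ <;>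
      exact hxy (seg_ext (by omega) (by omega))

lemma nested_card_le (L : List (Multiset Seg)) (hL : ∀ x ∈ L, IsLadder x)
    (n : Multiset Seg) (hnest : ∀ x ∈ n, ∀ y ∈ n, SegSub x y ∨ SegSub y x)
    (hle : n ≤ L.sum) : n.card ≤ L.length := by
  induction L generalizing n with
  | nil => simp_all [Multiset.le_zero.1 (by simpa using hle)]
  | cons m L ih =>
    have hsplit : n = n ∩ m + (n - m) := by
      ext a
      simp [Multiset.count_inter, Multiset.count_sub]
      omega
    have h1 : (n ∩ m).card ≤ 1 :=
      ladder_inter_card (hL m (by simp)) (Multiset.inter_le_right)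
        (fun x hx y hy => hnest x (Multiset.mem_of_le (Multiset.inter_le_left) hx)
          y (Multiset.mem_of_le (Multiset.inter_le_left) hy))
    have h2 : (n - m).card ≤ L.length := by
      apply ih (fun x hx => hL x (by simp [hx]))
      · exact fun x hx y hy => hnest x (Multiset.mem_of_le (Multiset.sub_le_self n m) hx)
          y (Multiset.mem_of_le (Multiset.sub_le_self n m) hy)
      · rw [Multiset.sub_le_iff_le_add]
        simpa [add_comm] using hle
    calc n.card = (n ∩ m).card + (n - m).card := by rw [← Multiset.card_add, ← hsplit]
      _ ≤ 1 + L.length := add_le_add h1 h2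
      _ = (m :: L).length := by simp [add_comm]

/-- a nested sub-multiset of a sum of `k` ladder multisegments has at most
`k` elements. -/
theorem nested_le_sum_ladders (L : List (Multiset Seg)) (hL : ∀ x ∈ L, IsLadder x)
    (l : List Seg) (hchain : l.Chain' SegSub) (hle : (↑l : Multiset Seg) ≤ L.sum) :
    l.length ≤ L.length := by
  have htrans : IsTrans Seg SegSub := ⟨fun _ _ _ h₁ h₂ => ⟨h₂.1.trans h₁.1, h₁.2.trans h₂.2⟩⟩
  have hpw : l.Pairwise SegSub := List.isChain_iff_pairwise.1 hchain
  have := nested_card_le L hL (↑l) (fun x hx y hy => ?_) hle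
  · simpa using this
  · by_cases hxy : x = y
    · exact Or.inl (hxy ▸ ⟨le_refl _, le_refl _⟩)
    · have hpw' : l.Pairwise (fun a b => SegSub a b ∨ SegSub b a) := hpw.imp Or.inl
      exact (haveI : Std.Symm (fun a b : Seg => SegSub a b ∨ SegSub b a) := ⟨fun _ _ h => h.symm⟩
        hpw'.forall) (Multiset.mem_coe.1 hx) (Multiset.mem_coe.1 hy) hxy
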